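/- arXiv:1110.1564 — 3 statements merged into one kernel-verified Lean document; each statement's English description precedes it below -/
import Mathlib

section
/- Let P be a positive semidefinite symmetric n×n real matrix, B̃ an n×m real matrix, and R̃ a positive definite symmetric m×m real matrix. Then R̃ + B̃ᵀPB̃ is positive definite, and the matrix P − PB̃(R̃ + B̃ᵀPB̃)⁻¹B̃ᵀP is positive semidefinite. -/
open Matrix

theorem stmt_3 {n m : ℕ}
    (P : Matrix (Fin n) (Fin n) ℝ) (hP : P.PosSemidef)
    (Btil : Matrix (Fin n) (Fin m) ℝ)
    (Rtil : Matrix (Fin m) (Fin m) ℝ) (hRtil : Rtil.PosDef) :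
    (Rtil + Btilᵀ * P * Btil).PosDef ∧
      (P - P * Btil * (Rtil + Btilᵀ * P * Btil)⁻¹ * Btilᵀ * P).PosSemidef := by
  have hBPB : (Btilᵀ * P * Btil).PosSemidef := by
    simpa using hP.conjTranspose_mul_mul_same Btil
  have hD : (Rtil + Btilᵀ * P * Btil).PosDef := hRtil.add_posSemidef hBPB
  haveI := hD.isUnit.invertible
  refine ⟨hD, ?_⟩
  set L := (open scoped MatrixOrder in CFC.sqrt P) with hL
  have hLL : L * L = P := open scoped MatrixOrder in CFC.sqrt_mul_sqrt_self P hP.nonneg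
  have hLH : Lᴴ = L := open scoped MatrixOrder in (CFC.sqrt_nonneg P).posSemidef.isHermitian
  have hLT : Lᵀ = L := by rw [← conjTranspose_eq_transpose_of_trivial]; exact hLH
  have hPT : Pᵀ = P := by rw [← conjTranspose_eq_transpose_of_trivial]; exact hP.isHermitian
  -- the big block matrix is PosSemidef
  have hblock : (fromBlocks P (P * Btil) (P * Btil)ᴴ (Rtil + Btilᵀ * P * Btil)).PosSemidef := by
    have h1 : ((fromCols L (L * Btil))ᴴ * fromCols L (L * Btil)).PosSemidef :=
      posSemidef_conjTranspose_mul_self _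
    have h2 : (fromBlocks (0 : Matrix (Fin n) (Fin n) ℝ)
        (0 : Matrix (Fin n) (Fin m) ℝ) (0 : Matrix (Fin m) (Fin n) ℝ) Rtil).PosSemidef := by
      haveI := hRtil.isUnit.invertible
      have := (PosDef.fromBlocks₂₂ (0 : Matrix (Fin n) (Fin n) ℝ)
        (0 : Matrix (Fin n) (Fin m) ℝ) hRtil).mpr (by simpa using Matrix.PosSemidef.zero)
      simpa using this
    have hsum := h1.add h2
    have heq : (fromCols L (L * Btil))ᴴ * fromCols L (L * Btil) +
        fromBlocks (0 : Matrix (Fin n) (Fin n) ℝ) 0 0 Rtil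
        = fromBlocks P (P * Btil) (P * Btil)ᴴ (Rtil + Btilᵀ * P * Btil) := by
      rw [conjTranspose_fromCols_eq_fromRows_conjTranspose, fromRows_mul_fromCols,
        fromBlocks_add]
      simp only [conjTranspose_eq_transpose_of_trivial, transpose_mul, hLT, hPT,
        add_zero, zero_add]
      rw [fromBlocks_inj]
      refine ⟨hLL, by rw [← Matrix.mul_assoc, hLL], ?_, ?_⟩
      · rw [Matrix.mul_assoc, hLL]
      · rw [add_comm]
        congr 1
        rw [Matrix.mul_assoc Btilᵀ, ← Matrix.mul_assoc L, hLL, ← Matrix.mul_assoc]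
    rw [heq] at hsum
    exact hsum
  have := (PosDef.fromBlocks₂₂ P (P * Btil) hD).mp hblock
  have hct : (P * Btil)ᴴ = Btilᵀ * P := by
    rw [conjTranspose_mul, hP.isHermitian.eq]; rfl
  rw [hct] at this
  have : P - P * Btil * (Rtil + Btilᵀ * P * Btil)⁻¹ * Btilᵀ * P
      = P - P * Btil * (Rtil + Btilᵀ * P * Btil)⁻¹ * (Btilᵀ * P) := by
    rw [Matrix.mul_assoc]
  rw [this]
  assumption
end

section
/- Let T > 0, b ∈ ℝ, and let p, π, p₀ : [0, T] → ℝ be continuously differentiable functions satisfying p′ + p − b²p² = 0, π′ − b²π² + p = 0, p₀′ + p₀ − b²p₀² = 0 on [0, T], with p(T) = g₀ + g, π(T) = g₀, p₀(T) = g₀, where g₀ ≥ 0 and g > 0. Assume p(s) > p₀(s) > 0 on [0, T). Then π(s) − p₀(s) = ∫ₛᵀ exp(−∫ₛᵗ b²(π(τ) + p₀(τ))dτ)(p(t) − p₀(t))dt, and consequently π(s) > p₀(s) for all s ∈ [0, T). -/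
open Real Set intervalIntegral

theorem stmt_10 (T b g₀ g : ℝ) (hT : 0 < T) (hg₀ : 0 ≤ g₀) (hg : 0 < g)
    (p pi' p₀ : ℝ → ℝ)
    (hp : ∀ s ∈ Icc (0 : ℝ) T, HasDerivAt p (b ^ 2 * p s ^ 2 - p s) s)
    (hpi' : ∀ s ∈ Icc (0 : ℝ) T, HasDerivAt pi' (b ^ 2 * pi' s ^ 2 - p s) s)
    (hp₀ : ∀ s ∈ Icc (0 : ℝ) T, HasDerivAt p₀ (b ^ 2 * p₀ s ^ 2 - p₀ s) s)
    (hpc : ContinuousOn p (Icc 0 T)) (hpi'c : ContinuousOn pi' (Icc 0 T))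
    (hp₀c : ContinuousOn p₀ (Icc 0 T))
    (hpT : p T = g₀ + g) (hpi'T : pi' T = g₀) (hp₀T : p₀ T = g₀)
    (horder : ∀ s ∈ Ico (0 : ℝ) T, p₀ s < p s ∧ 0 < p₀ s) :
    ∀ s ∈ Icc (0 : ℝ) T,
      pi' s - p₀ s =
        ∫ t in s..T,
          exp (-∫ τ in s..t, b ^ 2 * (pi' τ + p₀ τ)) * (p t - p₀ t) ∧
      (s < T → p₀ s < pi' s) := by
  have hT' : (0:ℝ) ≤ T := hT.le
  set a : ℝ → ℝ := fun τ => b ^ 2 * (pi' τ + p₀ τ) with ha_def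
  have hac : ContinuousOn a (Icc 0 T) := continuousOn_const.mul (hpi'c.add hp₀c)
  set aext : ℝ → ℝ := IccExtend hT' ((Icc (0:ℝ) T).restrict a) with haext_def
  have haextc : Continuous aext :=
    Continuous.Icc_extend' (continuousOn_iff_continuous_restrict.mp hac)
  have haexteq : ∀ x ∈ Icc (0:ℝ) T, aext x = a x := fun x hx => IccExtend_of_mem _ _ hx
  set q : ℝ → ℝ := fun t => p t - p₀ t with hq_def
  have hqc : ContinuousOn q (Icc 0 T) := hpc.sub hp₀c
  set qext : ℝ → ℝ := IccExtend hT' ((Icc (0:ℝ) T).restrict q) with hqext_def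
  have hqextc : Continuous qext :=
    Continuous.Icc_extend' (continuousOn_iff_continuous_restrict.mp hqc)
  have hqexteq : ∀ x ∈ Icc (0:ℝ) T, qext x = q x := fun x hx => IccExtend_of_mem _ _ hx
  set A : ℝ → ℝ := fun s => ∫ τ in (0:ℝ)..s, aext τ with hA_def
  have hA : ∀ s, HasDerivAt A (aext s) s := fun s =>
    (haextc.integral_hasStrictDerivAt 0 s).hasDerivAt
  have hAc : Continuous A := by
    rw [continuous_iff_continuousAt]; exact fun s => (hA s).continuousAt
  set h : ℝ → ℝ := fun t => exp (-A t) * qext t with hh_def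
  have hhc : Continuous h := ((hAc.neg).rexp).mul hqextc
  set F : ℝ → ℝ := fun s => exp (-A s) * (pi' s - p₀ s) with hF_def
  set G : ℝ → ℝ := fun s => -∫ t in T..s, h t with hG_def
  have hG : ∀ s, HasDerivAt G (-(h s)) s := fun s =>
    ((hhc.integral_hasStrictDerivAt T s).hasDerivAt).neg
  have hGc : Continuous G := by
    rw [continuous_iff_continuousAt]; exact fun s => (hG s).continuousAt
  have hF : ∀ s ∈ Icc (0:ℝ) T, HasDerivAt F (-(h s)) s := by
    intro s hs
    have hd : HasDerivAt F
        (exp (-A s) * (-aext s) * (pi' s - p₀ s) +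
          exp (-A s) * ((b ^ 2 * pi' s ^ 2 - p s) - (b ^ 2 * p₀ s ^ 2 - p₀ s))) s := by
      exact (((hA s).neg).exp).mul ((hpi' s hs).sub (hp₀ s hs))
    convert hd using 1
    rw [haexteq s hs]
    simp only [hh_def]
    rw [hqexteq s hs]
    simp only [ha_def, hq_def]
    ring
  set K : ℝ → ℝ := fun s => F s - G s with hK_def
  have hKc : ContinuousOn K (Icc 0 T) := by
    apply ContinuousOn.sub _ hGc.continuousOn
    exact ((hAc.neg).rexp).continuousOn.mul (hpi'c.sub hp₀c)
  have hKd : ∀ x ∈ Ico (0:ℝ) T, HasDerivWithinAt K 0 (Ici x) x := by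
    intro x hx
    have := (hF x (Ico_subset_Icc_self hx)).sub (hG x)
    have h2 := this.hasDerivWithinAt (s := Ici x)
    rw [sub_neg_eq_add, neg_add_cancel] at h2
    exact h2
  have hconst := constant_of_has_deriv_right_zero hKc hKd
  have hKT : K T = 0 := by
    simp only [hK_def, hF_def, hG_def, hpi'T, hp₀T, sub_self, mul_zero,
      intervalIntegral.integral_same, neg_zero, sub_zero]
  have hK0 : K 0 = 0 := by
    have := hconst T (right_mem_Icc.mpr hT')
    rw [hKT] at this; linarith
  have hFG : ∀ s ∈ Icc (0:ℝ) T, F s = G s := by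
    intro s hs
    have := hconst s hs
    rw [hK0] at this
    have : K s = 0 := this
    simpa [hK_def, sub_eq_zero] using this
  intro s hs
  have hsT : s ≤ T := hs.2
  have hs0 : 0 ≤ s := hs.1
  -- main equality in extended form
  have key : pi' s - p₀ s = ∫ t in s..T, exp (A s - A t) * qext t := by
    have h1 : pi' s - p₀ s = exp (A s) * F s := by
      simp only [hF_def, ← mul_assoc, ← Real.exp_add]
      simp
    have h2 : G s = ∫ t in s..T, h t := by
      simp only [hG_def, intervalIntegral.integral_symm s T, neg_neg]
    rw [h1, hFG s hs, h2, ← intervalIntegral.integral_const_mul]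
    apply intervalIntegral.integral_congr
    intro t ht
    simp only [hh_def, ← mul_assoc, ← Real.exp_add, sub_eq_add_neg]
  constructor
  · rw [key]
    apply intervalIntegral.integral_congr
    intro t ht
    rw [uIcc_of_le hsT] at ht
    have htIcc : t ∈ Icc (0:ℝ) T := ⟨le_trans hs0 ht.1, ht.2⟩
    have hinner : (∫ τ in s..t, aext τ) = ∫ τ in s..t, a τ := by
      apply intervalIntegral.integral_congr
      intro τ hτ
      rw [uIcc_of_le ht.1] at hτ
      exact haexteq τ ⟨le_trans hs0 hτ.1, le_trans hτ.2 ht.2⟩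
    have hAst : A s - A t = -∫ τ in s..t, a τ := by
      have h3 := intervalIntegral.integral_interval_sub_left (μ := MeasureTheory.volume)
        (haextc.intervalIntegrable 0 t) (haextc.intervalIntegrable 0 s)
      simp only [hA_def]
      rw [← hinner, ← h3]; ring
    show exp (A s - A t) * qext t = exp (-∫ τ in s..t, a τ) * (p t - p₀ t)
    rw [hAst, hqexteq t htIcc]
  · intro hsT'
    have hpos : 0 < ∫ t in s..T, exp (A s - A t) * qext t := by
      apply intervalIntegral.intervalIntegral_pos_of_pos_on
      · exact (((continuous_const.sub hAc).rexp).mul hqextc).intervalIntegrable s T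
      · intro t ht
        have htIco : t ∈ Ico (0:ℝ) T := ⟨le_trans hs0 ht.1.le, ht.2⟩
        have := (horder t htIco).1
        have hq : 0 < qext t := by
          rw [hqexteq t ⟨htIco.1, htIco.2.le⟩]; simpa [hq_def] using sub_pos.mpr this
        exact mul_pos (Real.exp_pos _) hq
      · exact hsT'
    have : 0 < pi' s - p₀ s := key ▸ hpos
    linarith
end

section
/- Let T > 0, b ∈ ℝ, and let p, π : [0, T] → ℝ be continuously differentiable with p′ + p − b²p² = 0 and π′ − b²π² + p = 0 on [0, T], p(T) = g₀ + g, π(T) = g₀, where g₀ ≥ 0 and g > 0. Then p(s) − π(s) = g · exp(−∫ₛᵀ b²(p(τ) + π(τ))dτ) for all s ∈ [0, T]; in particular p(s) > π(s) on [0, T]. -/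
open Real Set intervalIntegral

theorem stmt_11 (T b g₀ g : ℝ) (hT : 0 < T) (hg₀ : 0 ≤ g₀) (hg : 0 < g)
    (p pi' : ℝ → ℝ)
    (hp : ∀ s ∈ Icc (0 : ℝ) T, HasDerivAt p (b ^ 2 * p s ^ 2 - p s) s)
    (hpi' : ∀ s ∈ Icc (0 : ℝ) T, HasDerivAt pi' (b ^ 2 * pi' s ^ 2 - p s) s)
    (hpc : ContinuousOn p (Icc 0 T)) (hpi'c : ContinuousOn pi' (Icc 0 T))
    (hpT : p T = g₀ + g) (hpi'T : pi' T = g₀) :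
    ∀ s ∈ Icc (0 : ℝ) T,
      p s - pi' s = g * exp (-∫ τ in s..T, b ^ 2 * (p τ + pi' τ)) ∧ pi' s < p s := by
  -- continuous extensions of p and pi'
  set pr : ℝ → ℝ := fun x => ((projIcc (0:ℝ) T hT.le x : Icc (0:ℝ) T) : ℝ) with hpr
  have hprc : Continuous pr := continuous_subtype_val.comp continuous_projIcc
  have hprmem : ∀ x, pr x ∈ Icc (0:ℝ) T := fun x => (projIcc (0:ℝ) T hT.le x).2
  have hpreq : ∀ x ∈ Icc (0:ℝ) T, pr x = x := fun x hx => by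
    simp [hpr, projIcc_of_mem hT.le hx]
  set P : ℝ → ℝ := fun x => p (pr x) with hP
  set Q : ℝ → ℝ := fun x => pi' (pr x) with hQ
  have hPc : Continuous P := hpc.comp_continuous hprc hprmem
  have hQc : Continuous Q := hpi'c.comp_continuous hprc hprmem
  set a : ℝ → ℝ := fun x => b ^ 2 * (P x + Q x) with ha
  have hac : Continuous a := by continuity
  set A : ℝ → ℝ := fun s => ∫ τ in (0:ℝ)..s, a τ with hA
  have hAd : ∀ s : ℝ, HasDerivAt A (a s) s := fun s =>
    integral_hasDerivAt_right (hac.intervalIntegrable _ _)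
      (hac.stronglyMeasurableAtFilter _ _) hac.continuousAt
  set F : ℝ → ℝ := fun s => (p s - pi' s) * Real.exp (-(A s)) with hF
  have hFd : ∀ s ∈ Icc (0:ℝ) T, HasDerivAt F 0 s := by
    intro s hs
    have h1 := (hp s hs).sub (hpi' s hs)
    have h2 : HasDerivAt (fun x => Real.exp (-(A x))) (Real.exp (-(A s)) * -(a s)) s :=
      ((hAd s).neg).exp
    have h3 := h1.mul h2
    have hPs : P s = p s := by rw [hP]; simp [hpreq s hs]
    have hQs : Q s = pi' s := by rw [hQ]; simp [hpreq s hs]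
    refine h3.congr_deriv ?_
    rw [ha]; simp only [hPs, hQs, Pi.sub_apply]; ring
  have hAc : Continuous A := Differentiable.continuous (fun x => (hAd x).differentiableAt)
  have hFc : ContinuousOn F (Icc 0 T) :=
    (hpc.sub hpi'c).mul ((continuous_exp.comp hAc.neg).continuousOn)
  have hconst : ∀ y ∈ Icc (0:ℝ) T, F y = F 0 := by
    apply eq_of_has_deriv_right_eq (f' := fun _ => (0:ℝ)) (g := fun _ => F 0)
    · intro x hx
      exact ((hFd x (Ico_subset_Icc_self hx)).hasDerivWithinAt)
    · intro x hx; exact (hasDerivAt_const x (F 0)).hasDerivWithinAt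
    · exact hFc
    · exact continuousOn_const
    · rfl
  have hFT : F T = F 0 := hconst T (right_mem_Icc.mpr hT.le)
  intro s hs
  have hFs : F s = F T := (hconst s hs).trans hFT.symm
  have hDT : p T - pi' T = g := by rw [hpT, hpi'T]; ring
  have hkey : p s - pi' s = g * Real.exp (A s - A T) := by
    have h : (p s - pi' s) * Real.exp (-(A s)) = (p T - pi' T) * Real.exp (-(A T)) := hFs
    rw [hDT] at h
    have e1 : Real.exp (-(A s)) * Real.exp (A s) = 1 := by rw [← Real.exp_add]; simp
    have e2 : Real.exp (-(A T)) * Real.exp (A T) = 1 := by rw [← Real.exp_add]; simp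
    rw [Real.exp_sub, mul_div_assoc', eq_div_iff (Real.exp_ne_zero _)]
    linear_combination Real.exp (A s) * Real.exp (A T) * h
      - (p s - pi' s) * Real.exp (A T) * e1 + g * Real.exp (A s) * e2
  have hadd : A s + ∫ τ in s..T, a τ = A T := by
    rw [hA]
    exact integral_add_adjacent_intervals (hac.intervalIntegrable _ _)
      (hac.intervalIntegrable _ _)
  have hcongr : (∫ τ in s..T, a τ) = ∫ τ in s..T, b ^ 2 * (p τ + pi' τ) := by
    apply integral_congr
    intro x hx
    have hx' : x ∈ Icc (0:ℝ) T := by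
      rw [uIcc_of_le hs.2] at hx
      exact ⟨le_trans hs.1 hx.1, hx.2⟩
    rw [ha]
    simp only [hP, hQ, hpreq x hx']
  have heq : p s - pi' s = g * Real.exp (-∫ τ in s..T, b ^ 2 * (p τ + pi' τ)) := by
    have hAs : A s - A T = -∫ τ in s..T, a τ := by linarith
    rw [hkey, hAs, hcongr]
  refine ⟨heq, ?_⟩
  nlinarith [Real.exp_pos (-∫ τ in s..T, b ^ 2 * (p τ + pi' τ)), heq]
end
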